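/- arXiv:0911.3083 — 2 statements merged into one kernel-verified Lean document; each statement's English description precedes it below -/
import Mathlib

section
/- Let (X_n) be a stationary sequence that is L^1 near epoch dependent with approximation constants (a_l) satisfying \sum_l a_l^{\delta/(1+\delta)} < \infty and E|X_1|^{2+\delta} < \infty. Then \sum_{l=1}^\infty (E|X_0 - E[X_0|Z_{-l},...,Z_l]|^{(2+\delta)/(1+\delta)})^{(1+\delta)/(2+\delta)} < \infty. -/
open MeasureTheory ProbabilityTheory
open scoped ENNReal NNReal

noncomputable section

/-- Slope of the tangent line to `|·| ^ q` at `r`. -/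
private def tK (q r : ℝ) : ℝ := q * r * |r| ^ (q - 2)

/-- Intercept of the tangent line to `|·| ^ q` at `r`. -/
private def tB (q r : ℝ) : ℝ := |r| ^ q - tK q r * r

private lemma tangent_le {q : ℝ} (hq : 2 ≤ q) (r x : ℝ) :
    tB q r + tK q r * x ≤ |x| ^ q := by
  have hq0 : (0 : ℝ) < q := by linarith
  rcases eq_or_ne r 0 with rfl | hr
  · simp [tB, tK, Real.zero_rpow hq0.ne', Real.rpow_nonneg (abs_nonneg x)]
  have hr0 : 0 < |r| := abs_pos.mpr hr
  have key : 1 + q * (x / r - 1) ≤ |x / r| ^ q := by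
    rcases le_or_gt 0 (x / r) with hu | hu
    · have h := one_add_mul_self_le_rpow_one_add (s := x / r - 1)
        (by linarith) (by linarith : (1 : ℝ) ≤ q)
      rw [show (1 : ℝ) + (x / r - 1) = x / r by ring] at h
      rwa [abs_of_nonneg hu]
    · have h2 : (0 : ℝ) ≤ |x / r| ^ q := Real.rpow_nonneg (abs_nonneg _) _
      nlinarith [mul_nonneg (by linarith : (0:ℝ) ≤ q - 2) (by linarith : (0:ℝ) ≤ 1 - x / r)]
  have hmul := mul_le_mul_of_nonneg_left key (Real.rpow_pos_of_pos hr0 q).le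
  have hxr : |r| ^ q * |x / r| ^ q = |x| ^ q := by
    rw [← Real.mul_rpow (abs_nonneg _) (abs_nonneg _), ← abs_mul]
    congr 2
    field_simp
  have hsplit : |r| ^ q = r ^ 2 * |r| ^ (q - 2) := by
    have h := Real.rpow_add hr0 2 (q - 2)
    rw [show (2 : ℝ) + (q - 2) = q by ring] at h
    rw [h, show ((2 : ℝ)) = ((2 : ℕ) : ℝ) by norm_num, Real.rpow_natCast, sq_abs]
  calc tB q r + tK q r * x = |r| ^ q * (1 + q * (x / r - 1)) := by
        simp only [tB, tK]
        rw [hsplit]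
        field_simp
        ring
    _ ≤ |r| ^ q * |x / r| ^ q := hmul
    _ = |x| ^ q := hxr

private lemma rpow_le_of_forall_rat {q : ℝ} (hq : 2 ≤ q) {y E : ℝ}
    (h : ∀ r : ℚ, tB q (r : ℝ) + tK q (r : ℝ) * y ≤ E) : |y| ^ q ≤ E := by
  obtain ⟨u, hu_mem, hu_tend⟩ :=
    mem_closure_iff_seq_limit.1 (Rat.denseRange_cast (𝕜 := ℝ) y)
  choose r hr using hu_mem
  have c1 : Continuous fun z : ℝ => |z| ^ q :=
    continuous_abs.rpow_const fun z => Or.inr (by linarith)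
  have c2 : Continuous fun z : ℝ => |z| ^ (q - 2) :=
    continuous_abs.rpow_const fun z => Or.inr (by linarith)
  have hcontG : Continuous fun z : ℝ => tB q z + tK q z * y := by
    simp only [tB, tK]
    exact (c1.sub ((((continuous_const.mul continuous_id).mul c2)).mul continuous_id)).add
      ((((continuous_const.mul continuous_id).mul c2)).mul continuous_const)
  have htend : Filter.Tendsto (fun n => tB q (u n) + tK q (u n) * y)
      Filter.atTop (nhds (tB q y + tK q y * y)) := (hcontG.tendsto y).comp hu_tend
  have hGy : tB q y + tK q y * y = |y| ^ q := by simp only [tB, tK]; ring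
  rw [← hGy]
  refine le_of_tendsto htend (Filter.Eventually.of_forall fun n => ?_)
  rw [← hr n]
  exact h (r n)

/-- Conditional Jensen inequality for `|·| ^ q`, `2 ≤ q`, in integral form. -/
private lemma lintegral_condexp_abs_rpow_le {Ω : Type*} {m : MeasurableSpace Ω}
    [mΩ : MeasurableSpace Ω] (hm : m ≤ mΩ)
    (P : Measure Ω) [IsProbabilityMeasure P] {X : Ω → ℝ} (hXint : Integrable X P)
    {q : ℝ} (hq : 2 ≤ q) (hmom : Integrable (fun ω => |X ω| ^ q) P) :
    ∫⁻ ω, ENNReal.ofReal (|(P[X|m]) ω| ^ q) ∂P ≤ ENNReal.ofReal (∫ ω, |X ω| ^ q ∂P) := by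
  have hae : ∀ᵐ ω ∂P, ∀ r : ℚ,
      tB q (r : ℝ) + tK q (r : ℝ) * ((P[X|m]) ω) ≤ (P[(fun ω => |X ω| ^ q)|m]) ω := by
    rw [ae_all_iff]
    intro rq
    have h1 : P[(fun ω => tB q (rq : ℝ) + tK q (rq : ℝ) * X ω)|m]
        =ᵐ[P] fun ω => tB q (rq : ℝ) + tK q (rq : ℝ) * (P[X|m]) ω := by
      have e1 : (fun ω => tB q (rq : ℝ) + tK q (rq : ℝ) * X ω)
          = (fun _ => tB q (rq : ℝ)) + (tK q (rq : ℝ)) • X := by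
        funext ω; simp [smul_eq_mul]
      rw [e1]
      refine (condExp_add (integrable_const _) (hXint.smul _) m).trans ?_
      filter_upwards [condExp_smul (μ := P) (m := m) (tK q (rq : ℝ)) X] with ω hω
      simp [condExp_const hm, hω, smul_eq_mul]
    have h2 : P[(fun ω => tB q (rq : ℝ) + tK q (rq : ℝ) * X ω)|m]
        ≤ᵐ[P] P[(fun ω => |X ω| ^ q)|m] :=
      condExp_mono ((integrable_const _).add (hXint.const_mul _)) hmom
        (Filter.Eventually.of_forall fun ω => tangent_le hq _ _)
    filter_upwards [h1, h2] with ω h1ω h2ω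
    calc tB q (rq : ℝ) + tK q (rq : ℝ) * (P[X|m]) ω
        = (P[(fun ω => tB q (rq : ℝ) + tK q (rq : ℝ) * X ω)|m]) ω := h1ω.symm
      _ ≤ _ := h2ω
  have hpt : ∀ᵐ ω ∂P, |(P[X|m]) ω| ^ q ≤ (P[(fun ω => |X ω| ^ q)|m]) ω := by
    filter_upwards [hae] with ω hω
    exact rpow_le_of_forall_rat hq hω
  calc ∫⁻ ω, ENNReal.ofReal (|(P[X|m]) ω| ^ q) ∂P
      ≤ ∫⁻ ω, ENNReal.ofReal ((P[(fun ω => |X ω| ^ q)|m]) ω) ∂P :=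
        lintegral_mono_ae (hpt.mono fun ω h => ENNReal.ofReal_le_ofReal h)
    _ = ENNReal.ofReal (∫ ω, (P[(fun ω => |X ω| ^ q)|m]) ω ∂P) :=
        (ofReal_integral_eq_lintegral_ofReal integrable_condExp
          (condExp_nonneg (Filter.Eventually.of_forall fun ω =>
            Real.rpow_nonneg (abs_nonneg _) _))).symm
    _ = ENNReal.ofReal (∫ ω, |X ω| ^ q ∂P) := by rw [integral_condExp hm]

/-- If `(X_n)` is `L¹` near epoch dependent on `(Z_n)` with approximation constants
`(a_l)` satisfying `∑ a_l^{δ/(1+δ)} < ∞` and `E|X_1|^{2+δ} < ∞`, then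
`∑_l (E|X_1 - E[X_1|Z_{-l},…,Z_l]|^{(2+δ)/(1+δ)})^{(1+δ)/(2+δ)} < ∞`. -/
theorem ned_lp_approximation_summable
    {Ω : Type*} [mΩ : MeasurableSpace Ω] (P : Measure Ω) [IsProbabilityMeasure P]
    (Z : ℤ → Ω → ℝ) (X1 : Ω → ℝ) (hX1 : Measurable X1) (hX1int : Integrable X1 P)
    (δ : ℝ) (hδ : 0 < δ)
    (hmom : Integrable (fun ω => |X1 ω| ^ (2 + δ)) P)
    (F : ℕ → MeasurableSpace Ω)
    (hF : ∀ l : ℕ, F l = ⨆ i ∈ Set.Icc (-(l:ℤ)) (l:ℤ), MeasurableSpace.comap (Z i) inferInstance)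
    (hFle : ∀ l, F l ≤ mΩ)
    (a : ℕ → ℝ) (ha : ∀ l, 0 ≤ a l)
    (hNED : ∀ l : ℕ, (∫ ω, |X1 ω - (P[X1|F l]) ω| ∂P) ≤ a l)
    (hsum : Summable (fun l => a l ^ (δ / (1 + δ)))) :
    Summable (fun l : ℕ =>
      (∫ ω, |X1 ω - (P[X1|F l]) ω| ^ ((2 + δ) / (1 + δ)) ∂P) ^ ((1 + δ) / (2 + δ))) := by
  have hδ1 : (0:ℝ) < 1 + δ := by linarith
  have hδ2 : (0:ℝ) < 2 + δ := by linarith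
  have hδ1' : (1:ℝ) + δ ≠ 0 := hδ1.ne'
  have hδ2' : (2:ℝ) + δ ≠ 0 := hδ2.ne'
  have hδ0' : δ ≠ 0 := hδ.ne'
  have hq : (2:ℝ) ≤ 2 + δ := by linarith
  -- conjugate exponents
  have hr_pos : (0:ℝ) < (1 + δ) ^ 2 / (δ * (2 + δ)) := by positivity
  have ht_pos : (0:ℝ) < (1 + δ) ^ 2 := by positivity
  have hconj : Real.HolderConjugate ((1 + δ) ^ 2 / (δ * (2 + δ))) ((1 + δ) ^ 2) := by
    refine Real.holderConjugate_iff.mpr ⟨?_, ?_⟩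
    · rw [lt_div_iff₀ (by positivity)]
      nlinarith
    · field_simp
      ring
  -- the uniform moment bound
  have hmom_nonneg : 0 ≤ᵐ[P] fun ω => |X1 ω| ^ (2 + δ) :=
    Filter.Eventually.of_forall fun ω => Real.rpow_nonneg (abs_nonneg _) _
  set V : ℝ≥0∞ := ∫⁻ ω, ENNReal.ofReal (|X1 ω| ^ (2 + δ)) ∂P with hV_def
  have hV_eq : V = ENNReal.ofReal (∫ ω, |X1 ω| ^ (2 + δ) ∂P) :=
    (ofReal_integral_eq_lintegral_ofReal hmom hmom_nonneg).symm
  have hV_ne_top : V ≠ ⊤ := by rw [hV_eq]; exact ENNReal.ofReal_ne_top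
  set B₀ : ℝ≥0∞ := (2:ℝ≥0∞) ^ ((2 + δ) - 1) * (V + V) with hB₀_def
  have hB₀_ne_top : B₀ ≠ ⊤ :=
    ENNReal.mul_ne_top (ENNReal.rpow_ne_top_of_nonneg (by linarith) (by norm_num))
      (ENNReal.add_ne_top.2 ⟨hV_ne_top, hV_ne_top⟩)
  set C : ℝ := (B₀.toReal ^ ((1:ℝ) / (1 + δ) ^ 2)) ^ ((1 + δ) / (2 + δ)) with hC_def
  refine Summable.of_nonneg_of_le
    (fun l => Real.rpow_nonneg
      (integral_nonneg fun ω => Real.rpow_nonneg (abs_nonneg _) _) _)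
    (fun l => ?_) (hsum.mul_right C)
  -- Per-l bound
  set c : Ω → ℝ := P[X1|F l] with hc_def
  have hc_meas : Measurable c := (stronglyMeasurable_condExp.mono (hFle l)).measurable
  have hY_meas : Measurable fun ω => X1 ω - c ω := hX1.sub hc_meas
  have hY_int : Integrable (fun ω => X1 ω - c ω) P := hX1int.sub integrable_condExp
  -- L¹ bound
  have hA : ∫⁻ ω, ENNReal.ofReal |X1 ω - c ω| ∂P ≤ ENNReal.ofReal (a l) := by
    calc ∫⁻ ω, ENNReal.ofReal |X1 ω - c ω| ∂P
        = ENNReal.ofReal (∫ ω, |X1 ω - c ω| ∂P) :=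
          (ofReal_integral_eq_lintegral_ofReal hY_int.abs
            (Filter.Eventually.of_forall fun ω => abs_nonneg _)).symm
      _ ≤ ENNReal.ofReal (a l) := ENNReal.ofReal_le_ofReal (hNED l)
  -- conditional Jensen
  have hJ : ∫⁻ ω, ENNReal.ofReal (|c ω| ^ (2 + δ)) ∂P ≤ V := by
    rw [hV_eq]
    exact lintegral_condexp_abs_rpow_le (hFle l) P hX1int hq hmom
  -- uniform L^{2+δ} bound
  have hB : ∫⁻ ω, (ENNReal.ofReal |X1 ω - c ω|) ^ (2 + δ) ∂P ≤ B₀ := by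
    have hmono : ∀ ω, (ENNReal.ofReal |X1 ω - c ω|) ^ (2 + δ) ≤
        (2:ℝ≥0∞) ^ ((2 + δ) - 1) *
          (ENNReal.ofReal (|X1 ω| ^ (2 + δ)) + ENNReal.ofReal (|c ω| ^ (2 + δ))) := by
      intro ω
      have h1 : ENNReal.ofReal |X1 ω - c ω| ≤
          ENNReal.ofReal |X1 ω| + ENNReal.ofReal |c ω| := by
        calc ENNReal.ofReal |X1 ω - c ω| ≤ ENNReal.ofReal (|X1 ω| + |c ω|) :=
            ENNReal.ofReal_le_ofReal
              (by simpa [Real.norm_eq_abs] using norm_sub_le (X1 ω) (c ω))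
          _ = _ := ENNReal.ofReal_add (abs_nonneg _) (abs_nonneg _)
      calc (ENNReal.ofReal |X1 ω - c ω|) ^ (2 + δ)
          ≤ (ENNReal.ofReal |X1 ω| + ENNReal.ofReal |c ω|) ^ (2 + δ) :=
            ENNReal.rpow_le_rpow h1 (by linarith)
        _ ≤ (2:ℝ≥0∞) ^ ((2 + δ) - 1) *
              ((ENNReal.ofReal |X1 ω|) ^ (2 + δ) + (ENNReal.ofReal |c ω|) ^ (2 + δ)) :=
            ENNReal.rpow_add_le_mul_rpow_add_rpow _ _ (by linarith)
        _ = _ := by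
            rw [ENNReal.ofReal_rpow_of_nonneg (abs_nonneg _) (by linarith),
              ENNReal.ofReal_rpow_of_nonneg (abs_nonneg _) (by linarith)]
    have hmX : Measurable fun ω => ENNReal.ofReal (|X1 ω| ^ (2 + δ)) :=
      (hX1.abs.pow measurable_const).ennreal_ofReal
    have hmc : Measurable fun ω => ENNReal.ofReal (|c ω| ^ (2 + δ)) :=
      (hc_meas.abs.pow measurable_const).ennreal_ofReal
    calc ∫⁻ ω, (ENNReal.ofReal |X1 ω - c ω|) ^ (2 + δ) ∂P
        ≤ ∫⁻ ω, (2:ℝ≥0∞) ^ ((2 + δ) - 1) *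
            (ENNReal.ofReal (|X1 ω| ^ (2 + δ)) + ENNReal.ofReal (|c ω| ^ (2 + δ))) ∂P :=
          lintegral_mono hmono
      _ = (2:ℝ≥0∞) ^ ((2 + δ) - 1) *
            ∫⁻ ω, (ENNReal.ofReal (|X1 ω| ^ (2 + δ)) + ENNReal.ofReal (|c ω| ^ (2 + δ))) ∂P :=
          lintegral_const_mul _ (hmX.add hmc)
      _ = (2:ℝ≥0∞) ^ ((2 + δ) - 1) *
            (V + ∫⁻ ω, ENNReal.ofReal (|c ω| ^ (2 + δ)) ∂P) := by
          rw [lintegral_add_left hmX]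
      _ ≤ B₀ := by
          rw [hB₀_def]
          exact mul_le_mul_right (add_le_add le_rfl hJ) _
  -- Hölder interpolation
  have hf_meas : Measurable fun ω => ENNReal.ofReal |X1 ω - c ω| :=
    hY_meas.abs.ennreal_ofReal
  have hHolder : ∫⁻ ω, (ENNReal.ofReal |X1 ω - c ω|) ^ ((2 + δ) / (1 + δ)) ∂P ≤
      (∫⁻ ω, ENNReal.ofReal |X1 ω - c ω| ∂P) ^ (1 / ((1 + δ) ^ 2 / (δ * (2 + δ)))) *
      (∫⁻ ω, (ENNReal.ofReal |X1 ω - c ω|) ^ (2 + δ) ∂P) ^ (1 / (1 + δ) ^ 2) := by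
    have e0 : ∀ ω, (ENNReal.ofReal |X1 ω - c ω|) ^ ((2 + δ) / (1 + δ)) =
        (ENNReal.ofReal |X1 ω - c ω|) ^ (δ * (2 + δ) / (1 + δ) ^ 2) *
        (ENNReal.ofReal |X1 ω - c ω|) ^ ((2 + δ) / (1 + δ) ^ 2) := by
      intro ω
      rw [← ENNReal.rpow_add_of_nonneg _ _ (by positivity) (by positivity)]
      congr 1
      field_simp
      ring
    have e1 : ∀ ω, ((ENNReal.ofReal |X1 ω - c ω|) ^ (δ * (2 + δ) / (1 + δ) ^ 2)) ^
        ((1 + δ) ^ 2 / (δ * (2 + δ))) = ENNReal.ofReal |X1 ω - c ω| := by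
      intro ω
      rw [← ENNReal.rpow_mul,
        show δ * (2 + δ) / (1 + δ) ^ 2 * ((1 + δ) ^ 2 / (δ * (2 + δ))) = 1 by
          field_simp, ENNReal.rpow_one]
    have e2 : ∀ ω, ((ENNReal.ofReal |X1 ω - c ω|) ^ ((2 + δ) / (1 + δ) ^ 2)) ^
        ((1 + δ) ^ 2) = (ENNReal.ofReal |X1 ω - c ω|) ^ (2 + δ) := by
      intro ω
      rw [← ENNReal.rpow_mul]
      congr 1
      field_simp
    calc ∫⁻ ω, (ENNReal.ofReal |X1 ω - c ω|) ^ ((2 + δ) / (1 + δ)) ∂P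
        = ∫⁻ ω, ((ENNReal.ofReal |X1 ω - c ω|) ^ (δ * (2 + δ) / (1 + δ) ^ 2)) *
            ((ENNReal.ofReal |X1 ω - c ω|) ^ ((2 + δ) / (1 + δ) ^ 2)) ∂P :=
          lintegral_congr e0
      _ ≤ (∫⁻ ω, ((ENNReal.ofReal |X1 ω - c ω|) ^ (δ * (2 + δ) / (1 + δ) ^ 2)) ^
              ((1 + δ) ^ 2 / (δ * (2 + δ))) ∂P) ^ (1 / ((1 + δ) ^ 2 / (δ * (2 + δ)))) *
            (∫⁻ ω, ((ENNReal.ofReal |X1 ω - c ω|) ^ ((2 + δ) / (1 + δ) ^ 2)) ^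
              ((1 + δ) ^ 2) ∂P) ^ (1 / (1 + δ) ^ 2) := by
          have := ENNReal.lintegral_mul_le_Lp_mul_Lq P hconj
            (f := fun ω => (ENNReal.ofReal |X1 ω - c ω|) ^ ((δ * (2 + δ) / (1 + δ) ^ 2 : ℝ)))
            (g := fun ω => (ENNReal.ofReal |X1 ω - c ω|) ^ (((2 + δ) / (1 + δ) ^ 2 : ℝ)))
            ((hf_meas.pow measurable_const).aemeasurable)
            ((hf_meas.pow measurable_const).aemeasurable)
          simpa [one_div] using this
      _ = _ := by
          rw [lintegral_congr e1, lintegral_congr e2]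
  have hT : ∫⁻ ω, (ENNReal.ofReal |X1 ω - c ω|) ^ ((2 + δ) / (1 + δ)) ∂P ≤
      (ENNReal.ofReal (a l)) ^ (1 / ((1 + δ) ^ 2 / (δ * (2 + δ)))) *
      B₀ ^ (1 / (1 + δ) ^ 2) :=
    hHolder.trans (mul_le_mul'
      (ENNReal.rpow_le_rpow hA (by positivity))
      (ENNReal.rpow_le_rpow hB (by positivity)))
  -- convert the Bochner integral to the lintegral
  have hInt_eq : ∫ ω, |X1 ω - c ω| ^ ((2 + δ) / (1 + δ)) ∂P =
      (∫⁻ ω, (ENNReal.ofReal |X1 ω - c ω|) ^ ((2 + δ) / (1 + δ)) ∂P).toReal := by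
    rw [integral_eq_lintegral_of_nonneg_ae
      (Filter.Eventually.of_forall fun ω => Real.rpow_nonneg (abs_nonneg _) _)
      ((hY_meas.abs.pow measurable_const).aestronglyMeasurable)]
    congr 1
    exact lintegral_congr fun ω =>
      (ENNReal.ofReal_rpow_of_nonneg (abs_nonneg _) (by positivity)).symm
  have hRHS_ne : (ENNReal.ofReal (a l)) ^ (1 / ((1 + δ) ^ 2 / (δ * (2 + δ)))) *
      B₀ ^ (1 / (1 + δ) ^ 2) ≠ ⊤ :=
    ENNReal.mul_ne_top
      (ENNReal.rpow_ne_top_of_nonneg (by positivity) ENNReal.ofReal_ne_top)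
      (ENNReal.rpow_ne_top_of_nonneg (by positivity) hB₀_ne_top)
  have htoReal : ∫ ω, |X1 ω - c ω| ^ ((2 + δ) / (1 + δ)) ∂P ≤
      (a l) ^ (1 / ((1 + δ) ^ 2 / (δ * (2 + δ)))) * B₀.toReal ^ (1 / (1 + δ) ^ 2) := by
    rw [hInt_eq]
    have h := ENNReal.toReal_mono hRHS_ne hT
    rwa [ENNReal.toReal_mul, ← ENNReal.toReal_rpow, ← ENNReal.toReal_rpow,
      ENNReal.toReal_ofReal (ha l)] at h
  -- final computation
  have hterm_nonneg : (0:ℝ) ≤ ∫ ω, |X1 ω - c ω| ^ ((2 + δ) / (1 + δ)) ∂P :=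
    integral_nonneg fun ω => Real.rpow_nonneg (abs_nonneg _) _
  calc (∫ ω, |X1 ω - c ω| ^ ((2 + δ) / (1 + δ)) ∂P) ^ ((1 + δ) / (2 + δ))
      ≤ ((a l) ^ (1 / ((1 + δ) ^ 2 / (δ * (2 + δ)))) *
          B₀.toReal ^ (1 / (1 + δ) ^ 2)) ^ ((1 + δ) / (2 + δ)) :=
        Real.rpow_le_rpow hterm_nonneg htoReal (by positivity)
    _ = ((a l) ^ (1 / ((1 + δ) ^ 2 / (δ * (2 + δ))))) ^ ((1 + δ) / (2 + δ)) * C := by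
        rw [Real.mul_rpow (Real.rpow_nonneg (ha l) _) (Real.rpow_nonneg ENNReal.toReal_nonneg _),
          hC_def]
    _ = a l ^ (δ / (1 + δ)) * C := by
        rw [← Real.rpow_mul (ha l)]
        congr 2
        field_simp

end
end

section
/- Let (\xi_n) be a sequence of centered random variables such that sup_k E(\sum_{i=k+1}^{k+n} \xi_i)^2 \le Cn for all n \ge 1. Then (1/(\sqrt{n} \log^2 n)) \sum_{i=1}^n \xi_i -> 0 almost surely. -/
open MeasureTheory ProbabilityTheory Filter

lemma key_max (T : ℕ → ℝ) (hT0 : T 0 = 0) (m n : ℕ) (hn : n < 2^(m+1)) :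
    (T n)^2 ≤ (m+1) * ∑ j ∈ Finset.range (m+1), ∑ q ∈ Finset.range (2^(m-j)),
      (T (2^(j+1)*q + 2^j) - T (2^(j+1)*q))^2 := by
  set f : ℕ → ℕ := fun j => 2^j * (n / 2^j) with hf
  have htel : ∑ j ∈ Finset.range (m+1), (T (f j) - T (f (j+1))) = T n := by
    rw [Finset.sum_range_sub' (fun j => T (f j))]
    have h0 : f 0 = n := by simp [hf]
    have h1 : f (m+1) = 0 := by
      simp only [hf]
      rw [Nat.div_eq_of_lt hn]; ring
    rw [h0, h1, hT0, sub_zero]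
  have hCS : (T n)^2 ≤ (m+1) * ∑ j ∈ Finset.range (m+1), (T (f j) - T (f (j+1)))^2 := by
    calc (T n)^2 = (∑ j ∈ Finset.range (m+1), (T (f j) - T (f (j+1))))^2 := by rw [htel]
    _ ≤ ((Finset.range (m+1)).card) * ∑ j ∈ Finset.range (m+1), (T (f j) - T (f (j+1)))^2 :=
        sq_sum_le_card_mul_sum_sq
    _ = (m+1) * ∑ j ∈ Finset.range (m+1), (T (f j) - T (f (j+1)))^2 := by
        simp
  refine hCS.trans ?_
  refine mul_le_mul_of_nonneg_left (Finset.sum_le_sum fun j hj => ?_) (by positivity)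
  have hjm : j ≤ m := Nat.lt_succ_iff.mp (Finset.mem_range.mp hj)
  set q := n / 2^(j+1) with hq
  have hdd : n / 2^(j+1) = (n / 2^j) / 2 := by
    rw [pow_succ, Nat.div_div_eq_div_mul]
  have hqlt : q < 2^(m-j) := by
    rw [hq]
    apply Nat.div_lt_of_lt_mul
    calc n < 2^(m+1) := hn
    _ = 2^(j+1) * 2^(m-j) := by rw [← pow_add]; congr 1; omega
  rcases Nat.even_or_odd (n / 2^j) with ⟨c, hc⟩ | ⟨c, hc⟩
  · have : f j = f (j+1) := by
      simp only [hf, hdd, hc]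
      rw [show c + c = 2 * c by ring, Nat.mul_div_cancel_left _ (by norm_num)]
      ring
    rw [this, sub_self]
    have : (0:ℝ) ≤ ∑ q ∈ Finset.range (2^(m-j)), (T (2^(j+1)*q + 2^j) - T (2^(j+1)*q))^2 :=
      Finset.sum_nonneg fun _ _ => sq_nonneg _
    simpa using this
  · have hqc : q = c := by rw [hq, hdd, hc]; omega
    have hfj : f j = 2^(j+1)*q + 2^j := by
      simp only [hf, hc, hqc, pow_succ]; ring
    have hfj1 : f (j+1) = 2^(j+1)*q := by
      simp only [hf, hq]
    rw [hfj, hfj1]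
    exact Finset.single_le_sum (f := fun q => (T (2^(j+1)*q + 2^j) - T (2^(j+1)*q))^2)
      (fun _ _ => sq_nonneg _) (Finset.mem_range.mpr hqlt)

/-- If `(ξ_n)` are centered with `sup_k E(∑_{i=k+1}^{k+n} ξ_i)² ≤ C n` for all `n ≥ 1`,
then `(1/(√n log² n)) ∑_{i=1}^n ξ_i → 0` almost surely. -/
theorem sln_under_second_moment_bound
    {Ω : Type*} [MeasurableSpace Ω] (P : Measure Ω) [IsProbabilityMeasure P]
    (ξ : ℕ → Ω → ℝ) (hmeas : ∀ i, Measurable (ξ i))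
    (hL2 : ∀ i, MemLp (ξ i) 2 P)
    (hcent : ∀ i, ∫ ω, ξ i ω ∂P = 0)
    (C : ℝ) (hC : 0 < C)
    (hbound : ∀ k n : ℕ, 1 ≤ n →
      ∫ ω, (∑ i ∈ Finset.Icc (k + 1) (k + n), ξ i ω)^2 ∂P ≤ C * n) :
    ∀ᵐ ω ∂P, Tendsto
      (fun n : ℕ => (1 / (Real.sqrt n * (Real.log n)^2)) * ∑ i ∈ Finset.Icc 1 n, ξ i ω)
      atTop (nhds 0) := by
  classical
  set S : ℕ → Ω → ℝ := fun n ω => ∑ i ∈ Finset.Icc 1 n, ξ i ω with hSdef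
  set B : ℕ → ℕ → Ω → ℝ := fun a l ω => ∑ i ∈ Finset.Icc (a+1) (a+l), ξ i ω with hBdef
  have hS0 : ∀ ω, S 0 ω = 0 := by intro ω; simp [hSdef]
  have hSdiff : ∀ a l : ℕ, ∀ ω, S (a+l) ω - S a ω = B a l ω := by
    intro a l ω
    have hIcc : ∀ n : ℕ, Finset.Icc 1 n = Finset.Ioc 0 n := fun n => Finset.Icc_add_one_left_eq_Ioc 0 n
    have hIcc2 : Finset.Icc (a+1) (a+l) = Finset.Ioc a (a+l) := Finset.Icc_add_one_left_eq_Ioc a (a+l)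
    simp only [hSdef, hBdef, hIcc, hIcc2]
    rw [← Finset.sum_Ioc_consecutive (fun i => ξ i ω) (Nat.zero_le a) (Nat.le_add_right a l)]
    ring
  set G : ℕ → Ω → ℝ := fun m ω => ∑ j ∈ Finset.range (m+1), ∑ q ∈ Finset.range (2^(m-j)),
    (B (2^(j+1)*q) (2^j) ω)^2 with hGdef
  have hBmem : ∀ a l, MemLp (B a l) 2 P := by
    intro a l
    exact memLp_finsetSum _ (fun i _ => hL2 i)
  have hBsq_int : ∀ a l, Integrable (fun ω => (B a l ω)^2) P := fun a l => (hBmem a l).integrable_sq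
  have hGnonneg : ∀ m ω, 0 ≤ G m ω := by
    intro m ω
    exact Finset.sum_nonneg fun j _ => Finset.sum_nonneg fun q _ => sq_nonneg _
  have hGint : ∀ m, Integrable (G m) P := by
    intro m
    exact integrable_finset_sum _ (fun j _ => integrable_finset_sum _ (fun q _ => hBsq_int _ _))
  have hGmeas : ∀ m, Measurable (G m) := by
    intro m
    apply Finset.measurable_sum
    intro j _
    apply Finset.measurable_sum
    intro q _
    exact ((Finset.measurable_sum _ (fun i _ => hmeas i)).pow_const 2)
  have hGbound : ∀ m, ∫ ω, G m ω ∂P ≤ ((m:ℝ)+1) * (C * 2^m) := by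
    intro m
    rw [hGdef]
    rw [integral_finset_sum _ (fun j _ => integrable_finset_sum _ (fun q _ => hBsq_int _ _))]
    have : ∀ j ∈ Finset.range (m+1),
        ∫ ω, (∑ q ∈ Finset.range (2^(m-j)), (B (2^(j+1)*q) (2^j) ω)^2) ∂P ≤ C * 2^m := by
      intro j hj
      have hjm : j ≤ m := Nat.lt_succ_iff.mp (Finset.mem_range.mp hj)
      rw [integral_finset_sum _ (fun q _ => hBsq_int _ _)]
      have hterm : ∀ q ∈ Finset.range (2^(m-j)),
          ∫ ω, (B (2^(j+1)*q) (2^j) ω)^2 ∂P ≤ C * (2^j : ℕ) := by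
        intro q _
        exact hbound (2^(j+1)*q) (2^j) Nat.one_le_two_pow
      calc ∑ q ∈ Finset.range (2^(m-j)), ∫ ω, (B (2^(j+1)*q) (2^j) ω)^2 ∂P
          ≤ ∑ q ∈ Finset.range (2^(m-j)), C * (2^j : ℕ) := Finset.sum_le_sum hterm
        _ = (2^(m-j) : ℕ) * (C * (2^j : ℕ)) := by
            rw [Finset.sum_const, Finset.card_range, nsmul_eq_mul]
        _ = C * ((2^(m-j) * 2^j : ℕ) : ℝ) := by push_cast; ring
        _ = C * 2^m := by
            rw [← pow_add, Nat.sub_add_cancel hjm]; push_cast; ring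
    calc ∑ j ∈ Finset.range (m+1),
          ∫ ω, (∑ q ∈ Finset.range (2^(m-j)), (B (2^(j+1)*q) (2^j) ω)^2) ∂P
        ≤ ∑ j ∈ Finset.range (m+1), C * 2^m := Finset.sum_le_sum this
      _ = ((m:ℝ)+1) * (C * 2^m) := by
          rw [Finset.sum_const, Finset.card_range, nsmul_eq_mul]; push_cast; ring
  set V : ℕ → Ω → ℝ := fun m ω =>
    (((m:ℝ)+1) / ((2:ℝ)^m * ((m:ℝ)+1)^4)) * G m ω with hVdef
  have hVnonneg : ∀ m ω, 0 ≤ V m ω := by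
    intro m ω
    apply mul_nonneg (by positivity) (hGnonneg m ω)
  have hVmeas : ∀ m, Measurable (V m) := fun m => (hGmeas m).const_mul _
  have hVint : ∀ m, Integrable (V m) P := fun m => (hGint m).const_mul _
  have hVintbound : ∀ m, ∫ ω, V m ω ∂P ≤ C / ((m:ℝ)+1)^2 := by
    intro m
    rw [hVdef]
    simp only
    rw [integral_const_mul]
    have h1 : (0:ℝ) ≤ ((m:ℝ)+1) / ((2:ℝ)^m * ((m:ℝ)+1)^4) := by positivity
    calc (((m:ℝ)+1) / ((2:ℝ)^m * ((m:ℝ)+1)^4)) * ∫ ω, G m ω ∂P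
        ≤ (((m:ℝ)+1) / ((2:ℝ)^m * ((m:ℝ)+1)^4)) * (((m:ℝ)+1) * (C * 2^m)) :=
          mul_le_mul_of_nonneg_left (hGbound m) h1
      _ = C / ((m:ℝ)+1)^2 := by
          have hm1 : ((m:ℝ)+1) ≠ 0 := by positivity
          have h2m : ((2:ℝ)^m) ≠ 0 := by positivity
          field_simp
  -- summability
  have hsum : Summable (fun m : ℕ => C / ((m:ℝ)+1)^2) := by
    have h0 : Summable (fun n : ℕ => 1 / (n:ℝ)^2) := Real.summable_one_div_nat_pow.mpr one_lt_two
    have h1 : Summable (fun n : ℕ => C * (1 / ((n+1):ℝ)^2)) := by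
      apply Summable.mul_left
      exact_mod_cast (summable_nat_add_iff 1).mpr h0
    simpa [div_eq_mul_inv] using h1
  -- a.e. convergence of V to 0
  have hae : ∀ᵐ ω ∂P, Tendsto (fun m => V m ω) atTop (nhds 0) := by
    have hofReal : ∀ m, ∫⁻ ω, ENNReal.ofReal (V m ω) ∂P = ENNReal.ofReal (∫ ω, V m ω ∂P) :=
      fun m => (ofReal_integral_eq_lintegral_ofReal (hVint m)
        (Filter.Eventually.of_forall (hVnonneg m))).symm
    have h1 : ∫⁻ ω, ∑' m, ENNReal.ofReal (V m ω) ∂P ≠ ⊤ := by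
      rw [lintegral_tsum (fun m => ((hVmeas m).ennreal_ofReal).aemeasurable)]
      have hle : ∑' m : ℕ, ∫⁻ ω, ENNReal.ofReal (V m ω) ∂P
          ≤ ∑' m : ℕ, ENNReal.ofReal (C / ((m:ℝ)+1)^2) := by
        apply ENNReal.tsum_le_tsum
        intro m
        rw [hofReal m]
        exact ENNReal.ofReal_le_ofReal (hVintbound m)
      have hfin : ∑' m : ℕ, ENNReal.ofReal (C / ((m:ℝ)+1)^2) < ⊤ := by
        rw [← ENNReal.ofReal_tsum_of_nonneg (fun m => by positivity) hsum]
        exact ENNReal.ofReal_lt_top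
      exact (hle.trans_lt hfin).ne
    have hmeas_tsum : Measurable (fun ω => ∑' m, ENNReal.ofReal (V m ω)) :=
      Measurable.ennreal_tsum (fun m => (hVmeas m).ennreal_ofReal)
    filter_upwards [ae_lt_top hmeas_tsum h1] with ω hω
    have h2 : Tendsto (fun m => ENNReal.ofReal (V m ω)) atTop (nhds 0) :=
      ENNReal.tendsto_atTop_zero_of_tsum_ne_top hω.ne
    have h3 := (ENNReal.tendsto_toReal (a := 0) (by simp)).comp h2
    have h4 : ∀ m, (ENNReal.ofReal (V m ω)).toReal = V m ω :=
      fun m => ENNReal.toReal_ofReal (hVnonneg m ω)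
    have h5 : Tendsto (ENNReal.toReal ∘ fun m => ENNReal.ofReal (V m ω)) atTop (nhds 0) := by
      simpa using h3
    exact h5.congr h4
  -- final squeeze
  filter_upwards [hae] with ω hV
  set L2 : ℝ := Real.log 2 with hL2def
  have hL2pos : 0 < L2 := Real.log_pos one_lt_two
  set K : ℝ := 16 / L2^4 with hKdef
  have hKpos : 0 < K := by positivity
  -- tendsto of the bounding sequence
  have hlogtop : Tendsto (fun n : ℕ => Nat.log 2 n) atTop atTop := by
    apply tendsto_atTop_atTop.mpr
    intro b
    refine ⟨2^b, fun n hn => ?_⟩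
    have hn0 : n ≠ 0 := ((pow_pos (by norm_num : (0:ℕ) < 2) b).trans_le hn).ne'
    exact (Nat.le_log_iff_pow_le one_lt_two hn0).mpr hn
  have hVK : Tendsto (fun n : ℕ => V (Nat.log 2 n) ω * K) atTop (nhds 0) := by
    have := (hV.comp hlogtop).mul_const K
    simpa using this
  have hb : Tendsto (fun n : ℕ => Real.sqrt (V (Nat.log 2 n) ω * K)) atTop (nhds 0) := by
    have hc : Tendsto Real.sqrt (nhds 0) (nhds 0) := by
      simpa [Real.sqrt_zero] using (Real.continuous_sqrt.tendsto 0)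
    exact hc.comp hVK
  apply squeeze_zero_norm' _ hb
  filter_upwards [eventually_ge_atTop 2] with n hn2
  set m := Nat.log 2 n with hmdef
  have hn0 : n ≠ 0 := by omega
  have hm1 : 1 ≤ m := by
    rw [hmdef]
    exact (Nat.le_log_iff_pow_le one_lt_two hn0).mpr (by simpa using hn2)
  have h2m : 2^m ≤ n := Nat.pow_log_le_self 2 hn0
  have hlt : n < 2^(m+1) := Nat.lt_pow_succ_log_self one_lt_two n
  -- key max inequality
  have hkey : (S n ω)^2 ≤ ((m:ℝ)+1) * G m ω := by
    have h := key_max (fun k => S k ω) (hS0 ω) m n hlt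
    have heq : ∀ j ∈ Finset.range (m+1), ∀ q ∈ Finset.range (2^(m-j)),
        (S (2^(j+1)*q + 2^j) ω - S (2^(j+1)*q) ω)^2 = (B (2^(j+1)*q) (2^j) ω)^2 := by
      intro j _ q _
      rw [hSdiff (2^(j+1)*q) (2^j) ω]
    calc (S n ω)^2 ≤ ((m:ℝ)+1) * ∑ j ∈ Finset.range (m+1), ∑ q ∈ Finset.range (2^(m-j)),
          (S (2^(j+1)*q + 2^j) ω - S (2^(j+1)*q) ω)^2 := h
      _ = ((m:ℝ)+1) * G m ω := by
          congr 1
          exact Finset.sum_congr rfl fun j hj => Finset.sum_congr rfl fun q hq => heq j hj q hq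
  -- normalizer lower bound
  have hmR : (1:ℝ) ≤ (m:ℝ) := by exact_mod_cast hm1
  have hnR : (2:ℝ)^m ≤ (n:ℝ) := by exact_mod_cast h2m
  have hnpos : (0:ℝ) < n := by positivity
  have hlogn : ((m:ℝ)) * L2 ≤ Real.log n := by
    rw [hL2def, ← Real.log_pow]
    apply Real.log_le_log (by positivity) hnR
  have hlognpos : 0 < Real.log n := by
    have : Real.log 2 ≤ Real.log n := by
      apply Real.log_le_log two_pos
      exact_mod_cast hn2
    linarith
  have hdenlow : (2:ℝ)^m * ((m:ℝ)+1)^4 * L2^4 / 16 ≤ (n:ℝ) * (Real.log n)^4 := by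
    have hhalf : ((m:ℝ)+1)/2 ≤ (m:ℝ) := by linarith
    have hstep : ((m:ℝ)+1)/2 * L2 ≤ Real.log n := by
      calc ((m:ℝ)+1)/2 * L2 ≤ (m:ℝ) * L2 := by
            apply mul_le_mul_of_nonneg_right hhalf hL2pos.le
        _ ≤ Real.log n := hlogn
    have hstep4 : (((m:ℝ)+1)/2 * L2)^4 ≤ (Real.log n)^4 := by
      apply pow_le_pow_left₀ (by positivity) hstep
    calc (2:ℝ)^m * ((m:ℝ)+1)^4 * L2^4 / 16
        = (2:ℝ)^m * (((m:ℝ)+1)/2 * L2)^4 := by ring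
      _ ≤ (n:ℝ) * (Real.log n)^4 := by
          apply mul_le_mul hnR hstep4 (by positivity) (by positivity)
  -- squared term bound
  have hanorm : ((1 / (Real.sqrt n * (Real.log n)^2)) * S n ω)^2 ≤ V m ω * K := by
    have hden : (Real.sqrt n * (Real.log n)^2)^2 = (n:ℝ) * (Real.log n)^4 := by
      rw [mul_pow, Real.sq_sqrt hnpos.le]
      ring
    have heq : ((1 / (Real.sqrt n * (Real.log n)^2)) * S n ω)^2
        = (S n ω)^2 / ((n:ℝ) * (Real.log n)^4) := by
      rw [mul_comm, mul_one_div, div_pow, hden]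
    rw [heq]
    have hd0 : (0:ℝ) < (2:ℝ)^m * ((m:ℝ)+1)^4 * L2^4 / 16 := by positivity
    have h1 : (S n ω)^2 / ((n:ℝ) * (Real.log n)^4)
        ≤ (((m:ℝ)+1) * G m ω) / ((2:ℝ)^m * ((m:ℝ)+1)^4 * L2^4 / 16) :=
      div_le_div₀ (by positivity) hkey hd0 hdenlow
    refine h1.trans_eq ?_
    rw [hVdef, hKdef]
    have hm1' : ((m:ℝ)+1) ≠ 0 := by positivity
    have h2m' : ((2:ℝ)^m) ≠ 0 := by positivity
    have hL2' : L2 ≠ 0 := hL2pos.ne'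
    field_simp
  -- conclude
  have habs : |(1 / (Real.sqrt n * (Real.log n)^2)) * S n ω|
      ≤ Real.sqrt (V m ω * K) := by
    rw [← Real.sqrt_sq_eq_abs]
    exact Real.sqrt_le_sqrt hanorm
  rw [Real.norm_eq_abs]
  exact habs
end
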